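/- Weak equivalence characterization: for families of unit vectors (φ_ν), (ψ_ν) in Hilbert spaces H_ν, one has ∑_{ν∈I} |1 − |⟨φ_ν, ψ_ν⟩|| < ∞ if and only if there exist complex numbers z_ν with |z_ν| = 1 such that ∑_{ν∈I} |1 − ⟨z_ν φ_ν, ψ_ν⟩| < ∞. -/

import Mathlib

open scoped ComplexInnerProductSpace

/-- Weak equivalence characterization: `∑ ν, |1 - |⟨φ ν, ψ ν⟩|| < ∞` iff there exist
unimodular complex numbers `z ν` with `∑ ν, |1 - ⟨z ν • φ ν, ψ ν⟩| < ∞`. -/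
theorem weakEquiv_iff_exists_unimodular {I : Type*} {H : I → Type*}
    [∀ ν, NormedAddCommGroup (H ν)] [∀ ν, InnerProductSpace ℂ (H ν)]
    [∀ ν, CompleteSpace (H ν)] (φ ψ : ∀ ν, H ν)
    (hφ : ∀ ν, ‖φ ν‖ = 1) (hψ : ∀ ν, ‖ψ ν‖ = 1) :
    (Summable fun ν => |1 - ‖⟪φ ν, ψ ν⟫‖|) ↔
      ∃ z : I → ℂ, (∀ ν, ‖z ν‖ = 1) ∧
        Summable fun ν => ‖1 - ⟪z ν • φ ν, ψ ν⟫‖ := by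
  constructor
  · intro h
    refine ⟨fun ν => if h : ⟪φ ν, ψ ν⟫ = 0 then 1 else ⟪φ ν, ψ ν⟫ / ‖⟪φ ν, ψ ν⟫‖, ?_, ?_⟩
    · intro ν
      by_cases ha : ⟪φ ν, ψ ν⟫ = 0
      · simp [ha]
      · simp only [ha, dif_neg, not_false_iff]
        rw [norm_div, Complex.norm_real, norm_norm, div_self (norm_ne_zero_iff.mpr ha)]
    · have key : ∀ ν, ‖1 - ⟪(if h : ⟪φ ν, ψ ν⟫ = 0 then 1 else ⟪φ ν, ψ ν⟫ / ‖⟪φ ν, ψ ν⟫‖) • φ ν, ψ ν⟫‖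
          = |1 - ‖⟪φ ν, ψ ν⟫‖| := by
        intro ν
        rw [inner_smul_left]
        by_cases ha : ⟪φ ν, ψ ν⟫ = 0
        · simp [ha]
        · simp only [ha, dif_neg, not_false_iff]
          have hn : (‖⟪φ ν, ψ ν⟫‖ : ℂ) ≠ 0 := by
            exact_mod_cast norm_ne_zero_iff.mpr ha
          have : (starRingEnd ℂ) (⟪φ ν, ψ ν⟫ / ‖⟪φ ν, ψ ν⟫‖) * ⟪φ ν, ψ ν⟫
              = (‖⟪φ ν, ψ ν⟫‖ : ℂ) := by
            rw [map_div₀, Complex.conj_ofReal, div_mul_eq_mul_div, mul_comm,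
              Complex.mul_conj, div_eq_iff hn]
            norm_cast
            simp [Complex.normSq_eq_norm_sq, sq]
          rw [this]
          rw [show (1 : ℂ) - (‖⟪φ ν, ψ ν⟫‖ : ℂ) = ((1 - ‖⟪φ ν, ψ ν⟫‖ : ℝ) : ℂ) by push_cast; ring]
          rw [Complex.norm_real, Real.norm_eq_abs]
      simpa only [key] using h
  · rintro ⟨z, hz, hsum⟩
    refine hsum.of_nonneg_of_le (fun ν => abs_nonneg _) (fun ν => ?_)
    have h1 : ‖⟪z ν • φ ν, ψ ν⟫‖ = ‖⟪φ ν, ψ ν⟫‖ := by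
      rw [inner_smul_left, norm_mul, RingHomIsometric.norm_map, hz, one_mul]
    calc |1 - ‖⟪φ ν, ψ ν⟫‖| = |‖(1 : ℂ)‖ - ‖⟪z ν • φ ν, ψ ν⟫‖| := by
            rw [h1, norm_one]
      _ ≤ ‖1 - ⟪z ν • φ ν, ψ ν⟫‖ := abs_norm_sub_norm_le _ _
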